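/- arXiv:1402.6355 — 4 statements merged into one kernel-verified Lean document; each statement's English description precedes it below -/
import Mathlib

section
/- Let Ω be a field and let (E_n)_{n≥0} and (F_n)_{n≥0} be two increasing sequences of subfields of Ω such that E_n ⊆ F_n, E_n ⊆ E_{n+1} and F_n ⊆ F_{n+1} for every n. Let d and t be natural numbers with d ≥ 2 and t ≥ 2, and assume: (i) F_0 is a finite extension of E_0 with [F_0 : E_0] ≥ 2; (ii) for every n, F_{n+1}/F_n is finite of degree [F_{n+1} : F_n] = d; (iii) for every n, E_{n+1}/E_n is finite of degree [E_{n+1} : E_n] = t; (iv) either d ≥ t or gcd(d, t) = 1. Then for every n the inclusion E_n ⊆ F_n is strict; equivalently, [F_n : E_n] ≥ 2 for all n. -/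
/-- The degree `[B : A]` of one subfield of `Ω` over another, computed as the dimension of
`B` as a vector space over the copy `A.comap B.subtype` of `A` inside `B`
(this copy is just `A` itself when `A ≤ B`). -/
noncomputable def Subfield.relDeg {Ω : Type*} [Field Ω] (A B : Subfield Ω) : ℕ :=
  Module.finrank (A.comap B.subtype) B

/-- `B` is a finite (finite-dimensional) extension of `A`. -/
def Subfield.RelFinite {Ω : Type*} [Field Ω] (A B : Subfield Ω) : Prop :=
  FiniteDimensional (A.comap B.subtype) B

lemma Subfield.relDeg_eq_relfinrank {Ω : Type*} [Field Ω] (A B : Subfield Ω) :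
    A.relDeg B = A.relfinrank B := by
  rw [Subfield.relDeg, Subfield.finrank_comap, Subfield.fieldRange_subtype]

/-- **Theorem 3.1 (abstract form).**  Let `(Eₙ)` and `(Fₙ)` be two increasing sequences of
subfields of a field `Ω` with `Eₙ ⊆ Fₙ` for all `n`.  If `F₀/E₀` is finite of degree `≥ 2`,
every step `Fₙ₊₁/Fₙ` is finite of degree `d ≥ 2`, every step `Eₙ₊₁/Eₙ` is finite of degree
`t ≥ 2`, and either `d ≥ t` or `gcd(d, t) = 1`, then `Eₙ ⊊ Fₙ` for every `n`;
equivalently `[Fₙ : Eₙ] ≥ 2` for all `n`. -/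
theorem subtower_is_proper {Ω : Type*} [Field Ω] (E F : ℕ → Subfield Ω)
    (hEF : ∀ n, E n ≤ F n) (hE : ∀ n, E n ≤ E (n + 1)) (hF : ∀ n, F n ≤ F (n + 1))
    (d t : ℕ) (hd : 2 ≤ d) (ht : 2 ≤ t)
    (h0fin : (E 0).RelFinite (F 0)) (h0 : 2 ≤ (E 0).relDeg (F 0))
    (hFfin : ∀ n, (F n).RelFinite (F (n + 1)))
    (hFdeg : ∀ n, (F n).relDeg (F (n + 1)) = d)
    (hEfin : ∀ n, (E n).RelFinite (E (n + 1)))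
    (hEdeg : ∀ n, (E n).relDeg (E (n + 1)) = t)
    (hdt : t ≤ d ∨ Nat.gcd d t = 1) :
    ∀ n, E n < F n ∧ 2 ≤ (E n).relDeg (F n) := by
  simp only [Subfield.relDeg_eq_relfinrank] at h0 hFdeg hEdeg ⊢
  -- monotonicity of the towers
  have hEle : ∀ n, E 0 ≤ E n := fun n => by
    induction n with
    | zero => exact le_rfl
    | succ k ih => exact ih.trans (hE k)
  have hFle : ∀ n, F 0 ≤ F n := fun n => by
    induction n with
    | zero => exact le_rfl
    | succ k ih => exact ih.trans (hF k)
  -- degrees of the towers over the base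
  have hEn : ∀ n, (E 0).relfinrank (E n) = t ^ n := fun n => by
    induction n with
    | zero => simp
    | succ k ih =>
      rw [← Subfield.relfinrank_mul_relfinrank (hEle k) (hE k), ih, hEdeg, pow_succ]
  have hFn : ∀ n, (F 0).relfinrank (F n) = d ^ n := fun n => by
    induction n with
    | zero => simp
    | succ k ih =>
      rw [← Subfield.relfinrank_mul_relfinrank (hFle k) (hF k), ih, hFdeg, pow_succ]
  intro n
  set c := (E 0).relfinrank (F 0) with hc
  set r := (E n).relfinrank (F n) with hr
  have key : t ^ n * r = c * d ^ n := by
    have h1 := Subfield.relfinrank_mul_relfinrank (hEle n) (hEF n)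
    have h2 := Subfield.relfinrank_mul_relfinrank (hEF 0) (hFle n)
    rw [hEn n] at h1
    rw [hFn n, ← hc] at h2
    rw [← hr] at h1
    rw [h1, ← h2]
  have hr2 : 2 ≤ r := by
    rcases Nat.lt_or_ge r 2 with h | h
    · interval_cases r
      · -- r = 0 : RHS positive
        simp only [mul_zero] at key
        have : 0 < c * d ^ n :=
          Nat.mul_pos (lt_of_lt_of_le (by norm_num) h0) (Nat.pow_pos (by omega))
        omega
      · -- r = 1 : t ^ n = c * d ^ n ≥ 2 d ^ n
        simp only [mul_one] at key
        have hge : 2 * d ^ n ≤ t ^ n := by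
          calc 2 * d ^ n ≤ c * d ^ n := Nat.mul_le_mul_right _ h0
          _ = t ^ n := key.symm
        rcases hdt with htd | hcop
        · have : t ^ n ≤ d ^ n := Nat.pow_le_pow_left htd n
          have hdn : 0 < d ^ n := Nat.pow_pos (by omega)
          omega
        · have hdvd : d ^ n ∣ t ^ n := Dvd.intro_left c key.symm
          have hcop' : Nat.Coprime (d ^ n) (t ^ n) :=
            Nat.Coprime.pow _ _ (Nat.coprime_iff_gcd_eq_one.2 hcop)
          have h1 : d ^ n = 1 := Nat.Coprime.eq_one_of_dvd hcop' hdvd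
          have hn0 : n = 0 := by
            by_contra hn
            have := Nat.one_lt_pow hn (by omega : 1 < d)
            omega
          subst hn0
          simp only [pow_zero, mul_one, one_mul] at key
          omega
    · exact h
  refine ⟨lt_of_le_of_ne (hEF n) fun hEq => ?_, hr2⟩
  rw [hr, hEq, Subfield.relfinrank_self] at hr2
  omega
end

section
/- Let K be a field, Ω a field extension of K, and x ∈ Ω transcendental over K. Let h₁, h₂ ∈ K[X] be coprime polynomials with h₂ ≠ 0 and max(deg h₁, deg h₂) ≥ 2, and set z = h₁(x) / h₂(x) ∈ Ω (note h₂(x) ≠ 0 since x is transcendental). Then x does not belong to the intermediate field K(z) generated by z over K; in particular K(z) is a proper subfield of K(x). -/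
open Polynomial IntermediateField

private lemma aux_sum_zero {K : Type*} [Field K] {h₁ h₂ : Polynomial K}
    (hcop : IsCoprime h₁ h₂) (hd : 2 ≤ h₂.natDegree) :
    ∀ (N : ℕ) (c : ℕ → Polynomial K), (∀ i, (c i).natDegree ≤ 1) →
      (∑ i ∈ Finset.range (N + 1), c i * h₁ ^ i * h₂ ^ (N - i)) = 0 →
      ∀ i ≤ N, c i = 0 := by
  intro N
  induction N with
  | zero =>
      intro c hdc hsum i hi
      interval_cases i
      simpa using hsum
  | succ N ih =>
      intro c hdc hsum i hi
      have hh₂ : h₂ ≠ 0 := fun h => by simp [h] at hd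
      have hcN : c (N + 1) = 0 := by
        have hdvd : h₂ ∣ c (N + 1) * h₁ ^ (N + 1) := by
          rw [Finset.sum_range_succ] at hsum
          simp only [Nat.sub_self, pow_zero, mul_one] at hsum
          have hne : c (N + 1) * h₁ ^ (N + 1) =
              -∑ i ∈ Finset.range (N + 1), c i * h₁ ^ i * h₂ ^ (N + 1 - i) := by
            linear_combination hsum
          rw [hne]
          apply dvd_neg.mpr
          apply Finset.dvd_sum
          intro i hi'
          have hiN : i < N + 1 := Finset.mem_range.mp hi'
          have hsub : N + 1 - i = (N - i) + 1 := by omega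
          rw [hsub, pow_succ]
          exact ⟨c i * h₁ ^ i * h₂ ^ (N - i), by ring⟩
        have hdvd2 : h₂ ∣ c (N + 1) :=
          (hcop.symm.pow_right).dvd_of_dvd_mul_right hdvd
        by_contra hne
        have h1 := Polynomial.natDegree_le_of_dvd hdvd2 hne
        have h2 := hdc (N + 1)
        omega
      have hsum' : (∑ i ∈ Finset.range (N + 1), c i * h₁ ^ i * h₂ ^ (N - i)) = 0 := by
        have h0 : (∑ i ∈ Finset.range (N + 1), c i * h₁ ^ i * h₂ ^ (N - i)) * h₂ = 0 := by
          rw [Finset.sum_range_succ, hcN] at hsum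
          simp only [zero_mul, add_zero] at hsum
          rw [Finset.sum_mul, ← hsum]
          apply Finset.sum_congr rfl
          intro i hi'
          have hiN : i < N + 1 := Finset.mem_range.mp hi'
          have hsub : N + 1 - i = (N - i) + 1 := by omega
          rw [hsub, pow_succ]
          ring
        rcases mul_eq_zero.mp h0 with h | h
        · exact h
        · exact absurd h hh₂
      rcases eq_or_lt_of_le hi with rfl | hlt
      · exact hcN
      · exact ih c hdc hsum' i (by omega)

/-- **Base case of Theorem 3.1.**  If `x` is transcendental over `K` and
`z = h₁(x)/h₂(x)` for coprime polynomials `h₁, h₂ ∈ K[X]` with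
`max(deg h₁, deg h₂) ≥ 2`, then `x ∉ K(z)`; in particular `K(z) ⊊ K(x)`. -/
theorem transcendental_rat_function_proper_subfield
    {K Ω : Type*} [Field K] [Field Ω] [Algebra K Ω]
    (x : Ω) (hx : Transcendental K x)
    (h₁ h₂ : Polynomial K) (hcop : IsCoprime h₁ h₂) (hh₂ : h₂ ≠ 0)
    (hdeg : 2 ≤ max h₁.natDegree h₂.natDegree)
    (z : Ω) (hz : z = aeval x h₁ / aeval x h₂) :
    x ∉ IntermediateField.adjoin K {z} ∧
      IntermediateField.adjoin K {z} < IntermediateField.adjoin K {x} := by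
  have hinj : ∀ p : Polynomial K, aeval x p = 0 → p = 0 := by
    intro p hp
    by_contra h
    exact hx ⟨p, h, hp⟩
  have hB : aeval x h₂ ≠ 0 := fun h => hh₂ (hinj h₂ h)
  have hmain : x ∉ IntermediateField.adjoin K {z} := by
    intro hmem
    obtain ⟨a, b, hab⟩ := (IntermediateField.mem_adjoin_simple_iff K x).mp hmem
    have hx0 : x ≠ 0 := by
      intro h
      exact hx (h ▸ isAlgebraic_zero)
    have hb0 : aeval z b ≠ 0 := by
      intro h
      rw [h, div_zero] at hab
      exact hx0 hab
    have hbne : b ≠ 0 := fun h => hb0 (by simp [h])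
    set N := max a.natDegree b.natDegree with hN
    set A := aeval x h₁ with hA
    set B := aeval x h₂ with hB'
    -- key identity: clearing denominators
    have key : ∀ r : Polynomial K, r.natDegree ≤ N →
        B ^ N * aeval z r =
          aeval x (∑ i ∈ Finset.range (N + 1), C (r.coeff i) * h₁ ^ i * h₂ ^ (N - i)) := by
      intro r hr
      rw [aeval_eq_sum_range' (Nat.lt_succ_of_le hr), Finset.mul_sum, map_sum]
      apply Finset.sum_congr rfl
      intro i hi
      have hiN : i ≤ N := by
        have := Finset.mem_range.mp hi; omega
      rw [hz, map_mul, map_mul, map_pow, map_pow, aeval_C,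
        Algebra.smul_def, div_pow, ← pow_sub_mul_pow B hiN]
      have hBi : B ^ i ≠ 0 := pow_ne_zero _ hB
      field_simp
      ring
    have hab' : x * aeval z b = aeval z a := by
      rw [hab]
      field_simp
    have heq : aeval x (X * (∑ i ∈ Finset.range (N + 1), C (b.coeff i) * h₁ ^ i * h₂ ^ (N - i))
        - (∑ i ∈ Finset.range (N + 1), C (a.coeff i) * h₁ ^ i * h₂ ^ (N - i))) = 0 := by
      rw [map_sub, map_mul, aeval_X, ← key b (le_max_right _ _), ← key a (le_max_left _ _)]
      rw [show x * (B ^ N * aeval z b) = B ^ N * (x * aeval z b) by ring, hab']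
      ring
    have hpoly := hinj _ heq
    set c : ℕ → Polynomial K := fun i => C (b.coeff i) * X - C (a.coeff i) with hc
    have hdc : ∀ i, (c i).natDegree ≤ 1 := by
      intro i
      have : c i = C (b.coeff i) * X + C (-(a.coeff i)) := by
        rw [hc]; simp [sub_eq_add_neg]
      rw [this]
      exact natDegree_linear_le
    have hsum : ∑ i ∈ Finset.range (N + 1), c i * h₁ ^ i * h₂ ^ (N - i) = 0 := by
      rw [← hpoly, Finset.mul_sum, ← Finset.sum_sub_distrib]
      apply Finset.sum_congr rfl
      intro i _
      rw [hc]
      ring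
    have hall : ∀ i ≤ N, c i = 0 := by
      rcases le_max_iff.mp hdeg with h1 | h2
      · -- 2 ≤ deg h₁ : reflect the sum
        have hsum' : ∑ j ∈ Finset.range (N + 1),
            (fun j => c (N - j)) j * h₂ ^ j * h₁ ^ (N - j) = 0 := by
          rw [← hsum, ← Finset.sum_range_reflect (fun i => c i * h₁ ^ i * h₂ ^ (N - i)) (N + 1)]
          apply Finset.sum_congr rfl
          intro j hj
          have hj' : j < N + 1 := Finset.mem_range.mp hj
          have e1 : N + 1 - 1 - j = N - j := by omega
          have e2 : N - (N - j) = j := by omega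
          simp only [e1, e2]
          ring
        have := aux_sum_zero hcop.symm h1 N (fun j => c (N - j))
          (fun j => hdc (N - j)) hsum'
        intro i hi
        have h := this (N - i) (by omega)
        simpa [show N - (N - i) = i by omega] using h
      · exact aux_sum_zero hcop h2 N c hdc hsum
    -- contradiction: the leading coefficient of b gives a nonzero c i
    have hiN : b.natDegree ≤ N := le_max_right _ _
    have hzero := hall b.natDegree hiN
    have hcoeff : (c b.natDegree).coeff 1 = b.coeff b.natDegree := by
      rw [hc]
      simp [coeff_sub, coeff_C_mul, coeff_C]
    rw [hzero] at hcoeff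
    simp only [coeff_zero] at hcoeff
    exact (Polynomial.leadingCoeff_ne_zero.mpr hbne) hcoeff.symm
  refine ⟨hmain, ?_⟩
  have hle : IntermediateField.adjoin K {z} ≤ IntermediateField.adjoin K {x} := by
    rw [IntermediateField.adjoin_simple_le_iff]
    rw [hz]
    have h1 : aeval x h₁ ∈ IntermediateField.adjoin K {x} :=
      IntermediateField.algebra_adjoin_le_adjoin K {x} (Polynomial.aeval_mem_adjoin_singleton K x)
    have h2 : aeval x h₂ ∈ IntermediateField.adjoin K {x} :=
      IntermediateField.algebra_adjoin_le_adjoin K {x} (Polynomial.aeval_mem_adjoin_singleton K x)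
    exact div_mem h1 h2
  exact lt_of_le_of_ne hle fun h =>
    hmain (h ▸ IntermediateField.mem_adjoin_simple_self K x)
end

section
/- Let K be a field of characteristic 2 and let X denote the generator of the field of rational functions RatFunc K. Set b = (X² + X + 1)/X and u = (b + 1)/b, and set a = X² + X and s = (a + 1)/a. Then u³ + u = (X⁴ + X²)/(X⁶ + X⁵ + X³ + X + 1) and (s + 1)/s³ = (X⁴ + X²)/(X⁶ + X⁵ + X³ + X + 1); in particular u³ + u = (s + 1)/s³. -/
/-- **Functional equation of Example 3.**  In `RatFunc K`, `K` of characteristic 2, with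
`b = (X² + X + 1)/X`, `u = (b + 1)/b`, `a = X² + X` and `s = (a + 1)/a`, both
`u³ + u` and `(s + 1)/s³` equal `(X⁴ + X²)/(X⁶ + X⁵ + X³ + X + 1)`;
in particular `u³ + u = (s + 1)/s³`. -/
theorem artin_schreier_subtower_functional_equation {K : Type*} [Field K] [CharP K 2]
    (b u a s : RatFunc K)
    (hb : b = (RatFunc.X ^ 2 + RatFunc.X + 1) / RatFunc.X)
    (hu : u = (b + 1) / b)
    (ha : a = RatFunc.X ^ 2 + RatFunc.X)
    (hs : s = (a + 1) / a) :
    u ^ 3 + u = (RatFunc.X ^ 4 + RatFunc.X ^ 2) /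
        (RatFunc.X ^ 6 + RatFunc.X ^ 5 + RatFunc.X ^ 3 + RatFunc.X + 1) ∧
      (s + 1) / s ^ 3 = (RatFunc.X ^ 4 + RatFunc.X ^ 2) /
        (RatFunc.X ^ 6 + RatFunc.X ^ 5 + RatFunc.X ^ 3 + RatFunc.X + 1) ∧
      u ^ 3 + u = (s + 1) / s ^ 3 := by
  haveI : CharP (RatFunc K) 2 := charP_of_injective_algebraMap' K 2
  have h2 : (2 : RatFunc K) = 0 := by exact_mod_cast CharP.cast_eq_zero (RatFunc K) 2
  have key : ∀ p : Polynomial K, p.coeff 0 = 1 →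
      (algebraMap (Polynomial K) (RatFunc K)) p ≠ 0 := fun p hp =>
    RatFunc.algebraMap_ne_zero (fun h => by simp [h] at hp)
  have hX : (RatFunc.X : RatFunc K) ≠ 0 := RatFunc.X_ne_zero
  have hX1 : (RatFunc.X + 1 : RatFunc K) ≠ 0 := by
    have := key (Polynomial.X + 1) (by simp)
    simpa using this
  have h3 : (RatFunc.X ^ 2 + RatFunc.X + 1 : RatFunc K) ≠ 0 := by
    have := key (Polynomial.X ^ 2 + Polynomial.X + 1) (by simp)
    simpa using this
  have hd : (RatFunc.X ^ 6 + RatFunc.X ^ 5 + RatFunc.X ^ 3 + RatFunc.X + 1 : RatFunc K) ≠ 0 := by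
    have heq : (RatFunc.X ^ 6 + RatFunc.X ^ 5 + RatFunc.X ^ 3 + RatFunc.X + 1 : RatFunc K)
        = (RatFunc.X ^ 2 + RatFunc.X + 1) ^ 3 := by
      linear_combination (-(RatFunc.X ^ 5) - 3 * RatFunc.X ^ 4 - 3 * RatFunc.X ^ 3
        - 3 * RatFunc.X ^ 2 - RatFunc.X) * h2
    rw [heq]
    exact pow_ne_zero 3 h3
  have hbne : b ≠ 0 := by
    rw [hb]; exact div_ne_zero h3 hX
  have hane : a ≠ 0 := by
    rw [ha]
    have : (RatFunc.X ^ 2 + RatFunc.X : RatFunc K) = RatFunc.X * (RatFunc.X + 1) := by ring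
    rw [this]; exact mul_ne_zero hX hX1
  have hsne : s ≠ 0 := by
    rw [hs]
    refine div_ne_zero ?_ hane
    rw [ha]
    intro h; exact h3 (by linear_combination h)
  have p1 : u ^ 3 + u = (RatFunc.X ^ 4 + RatFunc.X ^ 2) /
      (RatFunc.X ^ 6 + RatFunc.X ^ 5 + RatFunc.X ^ 3 + RatFunc.X + 1 : RatFunc K) := by
    subst hu hb
    field_simp
    rw [div_eq_div_iff (pow_ne_zero 3 (by intro h; exact h3 (by linear_combination h)))
      (by intro h; exact hd (by linear_combination h))]
    ring_nf
    linear_combination ((1 : RatFunc K) * RatFunc.X ^ 0 + (6 : RatFunc K) * RatFunc.X ^ 1 + (16 : RatFunc K) * RatFunc.X ^ 2 + (26 : RatFunc K) * RatFunc.X ^ 3 + (28 : RatFunc K) * RatFunc.X ^ 4 + (24 : RatFunc K) * RatFunc.X ^ 5 + (21 : RatFunc K) * RatFunc.X ^ 6 + (24 : RatFunc K) * RatFunc.X ^ 7 + (28 : RatFunc K) * RatFunc.X ^ 8 + (26 : RatFunc K) * RatFunc.X ^ 9 + (16 : RatFunc K) * RatFunc.X ^ 10 + (6 : RatFunc K)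 * RatFunc.X ^ 11 + (1 : RatFunc K) * RatFunc.X ^ 12) * h2
  have p2 : (s + 1) / s ^ 3 = (RatFunc.X ^ 4 + RatFunc.X ^ 2) /
      (RatFunc.X ^ 6 + RatFunc.X ^ 5 + RatFunc.X ^ 3 + RatFunc.X + 1 : RatFunc K) := by
    rw [hs, ha] at hsne ⊢
    rw [ha] at hane
    field_simp
    rw [div_eq_div_iff (pow_ne_zero 3 (by intro h; exact h3 (by linear_combination h)))
      (by intro h; exact hd (by linear_combination h))]
    ring_nf
    linear_combination ((1 : RatFunc K) * RatFunc.X ^ 1 + (2 : RatFunc K) * RatFunc.X ^ 2 + (2 : RatFunc K) * RatFunc.X ^ 3 + (2 : RatFunc K) * RatFunc.X ^ 6 + (5 : RatFunc K) * RatFunc.X ^ 7 + (6 : RatFunc K) * RatFunc.X ^ 8 + (4 : RatFunc K) * RatFunc.X ^ 9 + (1 : RatFunc K) * RatFunc.X ^ 10) * h2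
  exact ⟨p1, p2, p1.trans p2.symm⟩
end

section
/- Let L be a field of characteristic 2, let v be an additive valuation on L with values in WithTop ℤ, and let x, y ∈ L with x ≠ 0 and y² + y/x = (1 + x²)/x². Then 2·v(y + 1) + 2·v(x) ≥ min(v(y) + v(x), 0). -/
/-- **Equation (5.4) of Section 5.**  Let `v` be an additive valuation on a field `L` of
characteristic 2, and let `x, y ∈ L` with `x ≠ 0` and `y² + y/x = (1 + x²)/x²`.  Then
`2·v(y + 1) + 2·v(x) ≥ min(v(y) + v(x), 0)`. -/
theorem valuation_inequality_eq54 {L : Type*} [Field L] [CharP L 2]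
    (v : AddValuation L (WithTop ℤ)) (x y : L) (hx : x ≠ 0)
    (hxy : y ^ 2 + y / x = (1 + x ^ 2) / x ^ 2) :
    min (v y + v x) 0 ≤ 2 * v (y + 1) + 2 * v x := by
  have h2 : (2 : L) = 0 := by exact_mod_cast CharP.cast_eq_zero L 2
  have hxy2 : y ^ 2 * x ^ 2 + y * x = 1 + x ^ 2 := by
    field_simp at hxy
    apply mul_right_cancel₀ hx
    linear_combination x * hxy
  have heq : ((y + 1) * x) ^ 2 = y * x + 1 := by
    linear_combination hxy2 + (y * x ^ 2 + x ^ 2 - y * x) * h2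
  have hmin : min (v (y * x)) (v 1) ≤ v (y * x + 1) := v.map_add _ _
  have hv1 : v (y * x + 1) = 2 • v ((y + 1) * x) := by
    rw [← heq, AddValuation.map_pow]
  rw [v.map_mul, v.map_one, hv1, v.map_mul] at hmin
  have key : ∀ a b : WithTop ℤ, (2 : ℕ) • (a + b) = 2 * a + 2 * b := by
    intro a b
    induction a using WithTop.recTopCoe with
    | top => rw [top_add, two_nsmul]; simp
    | coe m =>
      induction b using WithTop.recTopCoe with
      | top => rw [add_top, two_nsmul]; simp
      | coe n =>
        have h2' : (2 : WithTop ℤ) = ((2 : ℤ) : WithTop ℤ) := rfl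
        rw [h2', two_nsmul, ← WithTop.coe_add, ← WithTop.coe_mul, ← WithTop.coe_mul,
          ← WithTop.coe_add, ← WithTop.coe_add]
        norm_cast
        ring
  rw [key] at hmin
  exact hmin
end
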